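/- Let T be a (d₁,d₂)-biregular tree with d₁,d₂ ≥ 3 and Γ ≤ Aut(T) a tree lattice with associated Markov chain (Mₙ) on EQ. If there exist two edges e, f ∈ EQ such that e ≠ f̄, ∂₁(f) = ∂₀(e), ind(e) > 1 and ind(f) > 1, then the period of (Mₙ) is exactly 2. -/

import Mathlib

open Filter Topology MeasureTheory

attribute [local instance] Classical.propDecidable

namespace TreeDyn


variable {V : Type*}

/-- The type of directed edges of a simple graph. -/
def DEdge (T : SimpleGraph V) : Type _ := {p : V × V // T.Adj p.1 p.2}

/-- `T` is a `(d₁,d₂)`-biregular tree: a tree whose vertex set admits a bipartition such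
that every vertex of one class has degree `d₁` and every vertex of the other class has
degree `d₂`. -/
def IsBiregularTree (T : SimpleGraph V) (d₁ d₂ : ℕ) : Prop :=
  T.Connected ∧ T.IsAcyclic ∧
    ∃ c : V → Bool,
      (∀ u v, T.Adj u v → c u ≠ c v) ∧
      (∀ v, c v = true → Nat.card (T.neighborSet v) = d₁) ∧
      (∀ v, c v = false → Nat.card (T.neighborSet v) = d₂)

/-- A permutation of the vertices is an automorphism of `T` acting without edge
inversion if it preserves adjacency and moves every vertex an even distance. -/
def IsTreeAut (T : SimpleGraph V) (σ : Equiv.Perm V) : Prop :=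
  (∀ u v, T.Adj (σ u) (σ v) ↔ T.Adj u v) ∧ ∀ v, Even (T.dist v (σ v))

variable (T : SimpleGraph V) (Λ : Subgroup (Equiv.Perm V))

/-- Two vertices are related if they lie in the same `Λ`-orbit. -/
def vrel (u v : V) : Prop := ∃ γ ∈ Λ, γ u = v

/-- The vertex set of the quotient graph `Q = Λ∖T`. -/
def VQ := Quot (vrel Λ)

/-- Projection of vertices to the quotient graph. -/
def πV : V → VQ Λ := Quot.mk _

/-- Two directed edges are related if they lie in the same `Λ`-orbit. -/
def erel (e f : DEdge T) : Prop :=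
  ∃ γ ∈ Λ, γ e.1.1 = f.1.1 ∧ γ e.1.2 = f.1.2

/-- The directed edge set of the quotient graph `Q = Λ∖T`. -/
def EQ := Quot (erel T Λ)

/-- Projection of directed edges to the quotient graph. -/
def πE : DEdge T → EQ T Λ := Quot.mk _

/-- The initial vertex `∂₀ e` of a quotient edge. -/
noncomputable def tailQ (e : EQ T Λ) : VQ Λ := πV Λ (Quot.out e).1.1

/-- The terminal vertex `∂₁ e` of a quotient edge. -/
noncomputable def headQ (e : EQ T Λ) : VQ Λ := πV Λ (Quot.out e).1.2

/-- The reversal `ē` of a quotient edge. -/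
noncomputable def barQ (e : EQ T Λ) : EQ T Λ :=
  πE T Λ ⟨((Quot.out e).1.2, (Quot.out e).1.1), (Quot.out e).2.symm⟩

/-- The order of the stabilizer of a vertex in `Λ`. -/
noncomputable def stabV (v : V) : ℕ :=
  Nat.card {γ : Λ // (γ : Equiv.Perm V) v = v}

/-- The order of the pointwise stabilizer of a directed edge in `Λ`. -/
noncomputable def stabE (e : DEdge T) : ℕ :=
  Nat.card {γ : Λ // (γ : Equiv.Perm V) e.1.1 = e.1.1 ∧ (γ : Equiv.Perm V) e.1.2 = e.1.2}

/-- The index map of the edge-indexed graph: `ind e = [Λ_{∂₀ẽ} : Λ_ẽ]` for any lift `ẽ`. -/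
noncomputable def indQ (e : EQ T Λ) : ℕ :=
  stabV Λ (Quot.out e).1.1 / stabE T Λ (Quot.out e)

/-- The degree of a vertex of the quotient graph: the degree in `T` of any of its lifts. -/
noncomputable def degQ (v : VQ Λ) : ℕ := Nat.card (T.neighborSet (Quot.out v))

/-- `Δ(e) = ind(ē)/ind(e)`. -/
noncomputable def deltaQ (e : EQ T Λ) : ℝ :=
  (indQ T Λ (barQ T Λ e) : ℝ) / (indQ T Λ e : ℝ)

/-- `Λ` is a tree lattice: a discrete subgroup (finite vertex stabilizers) of `Aut T`
with finite covolume, i.e. `Σ_{v ∈ VQ} N_o(v)⁻¹ < ∞` where `N_o` is the multiplicative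
function along paths determined by `Δ`. -/
def IsTreeLattice : Prop :=
  (∀ γ ∈ Λ, IsTreeAut T γ) ∧
  (∀ v : V, Finite {γ : Λ // (γ : Equiv.Perm V) v = v}) ∧
  ∃ (o : VQ Λ) (N : VQ Λ → ℝ),
    N o = 1 ∧ (∀ v, 0 < N v) ∧
    (∀ e : EQ T Λ, N (headQ T Λ e) = deltaQ T Λ e * N (tailQ T Λ e)) ∧
    Summable (fun v : VQ Λ => (N v)⁻¹)

/-- The transition kernel of the Markov chain associated to `Λ` on the directed edges
of the quotient graph. -/
noncomputable def kerP (e f : EQ T Λ) : ℝ :=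
  if headQ T Λ e = tailQ T Λ f then
    (if f = barQ T Λ e then ((indQ T Λ f : ℝ) - 1) else (indQ T Λ f : ℝ)) /
      ((degQ T Λ (headQ T Λ e) : ℝ) - 1)
  else 0

/-- The `n`-step transition kernel. -/
noncomputable def kerPn : ℕ → EQ T Λ → EQ T Λ → ℝ
  | 0, e, f => if e = f then 1 else 0
  | n + 1, e, f => ∑' g : EQ T Λ, kerPn n e g * kerP T Λ g f

/-- Adjacency in the quotient graph. -/
def AdjQ (u v : VQ Λ) : Prop :=
  ∃ e : EQ T Λ, tailQ T Λ e = u ∧ headQ T Λ e = v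

/-- Graph distance on the quotient graph. -/
noncomputable def distQ (u v : VQ Λ) : ℕ :=
  sInf {n : ℕ | ∃ f : ℕ → VQ Λ, f 0 = u ∧ f n = v ∧ ∀ i < n, AdjQ T Λ (f i) (f (i + 1))}

/-- Distance from a finite set of vertices of the quotient graph. -/
noncomputable def distToF (F : Finset (VQ Λ)) (v : VQ Λ) : ℕ :=
  sInf {n : ℕ | ∃ u ∈ F, distQ T Λ u v = n}

/-- `F` is a finite part for `Λ`: the complement of `F` in the quotient graph is a
disjoint union of finitely many open Nagao rays. -/
def IsFinitePart (F : Finset (VQ Λ)) : Prop :=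
  ∃ (k : ℕ) (ray : Fin k → ℕ → VQ Λ),
    (∀ v : VQ Λ, v ∉ F ↔ ∃ i n, ray i n = v) ∧
    (∀ i n j m, ray i n = ray j m → i = j ∧ n = m) ∧
    (∀ i n, ∃ e : EQ T Λ, tailQ T Λ e = ray i n ∧ headQ T Λ e = ray i (n + 1)) ∧
    (∀ i n, ∀ e f : EQ T Λ, tailQ T Λ e = ray i n → headQ T Λ e = ray i (n + 1) →
      tailQ T Λ f = ray i n → headQ T Λ f = ray i (n + 1) → e = f) ∧
    (∀ i n, ∀ e : EQ T Λ, tailQ T Λ e = ray i n → headQ T Λ e ∉ F →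
      headQ T Λ e = ray i (n + 1) ∨ ∃ m, n = m + 1 ∧ headQ T Λ e = ray i m) ∧
    (∀ i n, ∀ e : EQ T Λ, tailQ T Λ e = ray i n → headQ T Λ e = ray i (n + 1) →
      indQ T Λ e = 1) ∧
    (∀ i n, ∀ e : EQ T Λ, tailQ T Λ e = ray i (n + 1) → headQ T Λ e = ray i n →
      indQ T Λ e = degQ T Λ (ray i n) - 1)

/-- A tree lattice is geometrically finite if its quotient graph contains a nonempty
finite subgraph whose complement is a disjoint union of finitely many open Nagao rays. -/
def IsGeomFinite : Prop := ∃ F : Finset (VQ Λ), F.Nonempty ∧ IsFinitePart T Λ F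

/-- The mass that the projection to `VQ` of the uniform measure on the sphere
`S(vb,n)` gives to the vertex `q` of the quotient graph. -/
noncomputable def sphPush (vb : V) (n : ℕ) (q : VQ Λ) : ℝ :=
  (Nat.card {w : V // T.dist vb w = n ∧ πV Λ w = q} : ℝ) /
    (Nat.card {w : V // T.dist vb w = n} : ℝ)

/-- `ℙ_e(τ = i)` : the probability that the Markov chain started at `e` hits the set of
edges with terminal vertex in `F` for the first time at time `i`. -/
noncomputable def hitP (F : Finset (VQ Λ)) : ℕ → EQ T Λ → ℝ
  | 0, e => if headQ T Λ e ∈ F then 1 else 0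
  | i + 1, e => if headQ T Λ e ∈ F then 0 else ∑' f : EQ T Λ, kerP T Λ e f * hitP F i f

/-- `ℙ_e(τ' = i)` where `τ' = min {n | n ≥ τ, 2 ∣ n}`. -/
noncomputable def hitP' (F : Finset (VQ Λ)) (i : ℕ) (e : EQ T Λ) : ℝ :=
  if 2 ∣ i then hitP T Λ F i e + (if 1 ≤ i then hitP T Λ F (i - 1) e else 0) else 0

/-- `(Ω₀, Ω₁)` is the pair of cyclic classes of the (period two) kernel `P`. -/
def IsCyclicPair (Ω₀ Ω₁ : Set (EQ T Λ)) : Prop :=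
  (∀ e, e ∈ Ω₀ ∨ e ∈ Ω₁) ∧ (∀ e, ¬(e ∈ Ω₀ ∧ e ∈ Ω₁)) ∧
  (∀ e ∈ Ω₀, ∀ f, kerP T Λ e f ≠ 0 → f ∈ Ω₁) ∧
  (∀ e ∈ Ω₁, ∀ f, kerP T Λ e f ≠ 0 → f ∈ Ω₀)

/-- `Ω` is a cyclic class of the kernel `P`. -/
def IsCyclicClass (Ω : Set (EQ T Λ)) : Prop :=
  ∃ Ω', IsCyclicPair T Λ Ω Ω' ∨ IsCyclicPair T Λ Ω' Ω


-- ## Basic equivalence-relation lemmas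

theorem vrel_equiv : Equivalence (vrel Λ) := by
  constructor
  · exact fun u => ⟨1, Λ.one_mem, rfl⟩
  · rintro u v ⟨γ, hγ, rfl⟩
    exact ⟨γ⁻¹, Λ.inv_mem hγ, Equiv.symm_apply_apply γ u⟩
  · rintro u v w ⟨γ, hγ, rfl⟩ ⟨δ, hδ, rfl⟩
    exact ⟨δ * γ, Λ.mul_mem hδ hγ, rfl⟩

theorem erel_equiv : Equivalence (erel T Λ) := by
  constructor
  · exact fun e => ⟨1, Λ.one_mem, rfl, rfl⟩
  · rintro e f ⟨γ, hγ, h1, h2⟩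
    exact ⟨γ⁻¹, Λ.inv_mem hγ, by rw [← h1]; exact Equiv.symm_apply_apply γ _,
      by rw [← h2]; exact Equiv.symm_apply_apply γ _⟩
  · rintro e f g ⟨γ, hγ, h1, h2⟩ ⟨δ, hδ, h3, h4⟩
    exact ⟨δ * γ, Λ.mul_mem hδ hγ, by simp [Equiv.Perm.mul_apply, h1, h3],
      by simp [Equiv.Perm.mul_apply, h2, h4]⟩

theorem πV_eq_iff {u v : V} : πV Λ u = πV Λ v ↔ vrel Λ u v := by
  exact (Quot.eq (r := vrel Λ)).trans (vrel_equiv Λ).eqvGen_iff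

theorem πE_eq_iff {e f : DEdge T} : πE T Λ e = πE T Λ f ↔ erel T Λ e f := by
  exact (Quot.eq (r := erel T Λ)).trans (erel_equiv T Λ).eqvGen_iff

theorem πE_out (q : EQ T Λ) : πE T Λ (Quot.out q) = q := Quot.out_eq q

theorem πV_out (v : VQ Λ) : πV Λ (Quot.out v) = v := Quot.out_eq v

theorem out_rel {q : EQ T Λ} {x : DEdge T} (h : πE T Λ x = q) :
    erel T Λ (Quot.out q) x :=
  (erel_equiv T Λ).symm ((πE_eq_iff T Λ).1 (h.trans (πE_out T Λ q).symm))

theorem tailQ_mk (x : DEdge T) : tailQ T Λ (πE T Λ x) = πV Λ x.1.1 := by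
  obtain ⟨γ, hγ, h1, _⟩ := out_rel T Λ (q := πE T Λ x) rfl
  exact (πV_eq_iff Λ).2 ⟨γ, hγ, h1⟩

theorem headQ_mk (x : DEdge T) : headQ T Λ (πE T Λ x) = πV Λ x.1.2 := by
  obtain ⟨γ, hγ, _, h2⟩ := out_rel T Λ (q := πE T Λ x) rfl
  exact (πV_eq_iff Λ).2 ⟨γ, hγ, h2⟩

/-- reversal of a directed edge -/
def rev (x : DEdge T) : DEdge T := ⟨(x.1.2, x.1.1), x.2.symm⟩

theorem erel_rev {x y : DEdge T} (h : erel T Λ x y) : erel T Λ (rev T x) (rev T y) := by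
  obtain ⟨γ, hγ, h1, h2⟩ := h
  exact ⟨γ, hγ, h2, h1⟩

theorem barQ_mk (x : DEdge T) : barQ T Λ (πE T Λ x) = πE T Λ (rev T x) := by
  apply (πE_eq_iff T Λ).2
  exact erel_rev T Λ (out_rel T Λ (q := πE T Λ x) rfl)

theorem rev_rev (x : DEdge T) : rev T (rev T x) = x := by
  apply Subtype.ext
  simp [rev]

theorem barQ_barQ (q : EQ T Λ) : barQ T Λ (barQ T Λ q) = q := by
  conv_lhs => rw [← πE_out T Λ q]
  rw [barQ_mk, barQ_mk, rev_rev, πE_out]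

theorem tailQ_barQ (q : EQ T Λ) : tailQ T Λ (barQ T Λ q) = headQ T Λ q := by
  conv_lhs => rw [← πE_out T Λ q, barQ_mk, tailQ_mk]
  rfl

theorem headQ_barQ (q : EQ T Λ) : headQ T Λ (barQ T Λ q) = tailQ T Λ q := by
  conv_lhs => rw [← πE_out T Λ q, barQ_mk, headQ_mk]
  rfl

theorem barQ_eq_iff (q r : EQ T Λ) : barQ T Λ q = r ↔ q = barQ T Λ r := by
  constructor
  · rintro rfl; rw [barQ_barQ]
  · rintro rfl; rw [barQ_barQ]


section Colors
variable {c : V → Bool}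

include T in
theorem walk_parity (hprop : ∀ u v, T.Adj u v → c u ≠ c v)
    {u v : V} (p : T.Walk u v) : (c u = c v) ↔ Even p.length := by
  induction p with
  | nil => simp
  | @cons a b w h p ih =>
    have hab := hprop a b h
    rw [SimpleGraph.Walk.length_cons, Nat.even_add_one, ← ih]
    cases hca : c a <;> cases hcb : c b <;> cases hcv : c w <;> simp_all

theorem color_of_even_dist (hprop : ∀ u v, T.Adj u v → c u ≠ c v)
    (hconn : T.Connected) {u v : V}
    (h : Even (T.dist u v)) : c u = c v := by
  obtain ⟨p, hp⟩ := (hconn u v).exists_walk_length_eq_dist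
  exact (walk_parity T hprop p).2 (hp ▸ h)

theorem color_invariant (hprop : ∀ u v, T.Adj u v → c u ≠ c v)
    (hΛaut : ∀ γ ∈ Λ, IsTreeAut T γ) (hconn : T.Connected)
    {γ : Equiv.Perm V} (hγ : γ ∈ Λ) (v : V) : c (γ v) = c v :=
  (color_of_even_dist T hprop hconn ((hΛaut γ hγ).2 v)).symm

/-- the induced coloring on the quotient -/
noncomputable def cbar (hprop : ∀ u v, T.Adj u v → c u ≠ c v)
    (hΛaut : ∀ γ ∈ Λ, IsTreeAut T γ) (hconn : T.Connected) : VQ Λ → Bool :=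
  Quot.lift c (by rintro u v ⟨γ, hγ, rfl⟩; exact (color_invariant T Λ hprop hΛaut hconn hγ u).symm)

variable (hprop : ∀ u v, T.Adj u v → c u ≠ c v)
    (hΛaut : ∀ γ ∈ Λ, IsTreeAut T γ) (hconn : T.Connected)

theorem cbar_mk (u : V) : cbar T Λ hprop hΛaut hconn (πV Λ u) = c u := rfl

theorem cbar_flip (q : EQ T Λ) :
    cbar T Λ hprop hΛaut hconn (tailQ T Λ q) ≠ cbar T Λ hprop hΛaut hconn (headQ T Λ q) := by
  have := hprop _ _ (Quot.out q).2
  simpa [tailQ, headQ, cbar_mk] using this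

include hprop hΛaut hconn in
theorem tailQ_ne_headQ (q : EQ T Λ) : tailQ T Λ q ≠ headQ T Λ q := by
  intro h
  exact cbar_flip T Λ hprop hΛaut hconn q (by rw [h])

end Colors

section Degree
variable {d₁ d₂ : ℕ}

theorem three_le_card_neighbor (hT : IsBiregularTree T d₁ d₂)
    (hd₁ : 3 ≤ d₁) (hd₂ : 3 ≤ d₂) (v : V) : 3 ≤ Nat.card (T.neighborSet v) := by
  obtain ⟨-, -, c, -, h₁, h₂⟩ := hT
  cases hcv : c v
  · rw [h₂ v hcv]; exact hd₂
  · rw [h₁ v hcv]; exact hd₁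

theorem neighbor_finite (hT : IsBiregularTree T d₁ d₂)
    (hd₁ : 3 ≤ d₁) (hd₂ : 3 ≤ d₂) (v : V) : Finite (T.neighborSet v) :=
  Nat.finite_of_card_ne_zero (by
    have := three_le_card_neighbor T hT hd₁ hd₂ v; omega)

theorem three_le_degQ (hT : IsBiregularTree T d₁ d₂)
    (hd₁ : 3 ≤ d₁) (hd₂ : 3 ≤ d₂) (v : VQ Λ) : 3 ≤ degQ T Λ v :=
  three_le_card_neighbor T hT hd₁ hd₂ _

end Degree

section Index
variable (hstab : ∀ v : V, Finite {γ : Λ // (γ : Equiv.Perm V) v = v})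

include hstab in
theorem stabE_finite (x : DEdge T) :
    Finite {γ : Λ // (γ : Equiv.Perm V) x.1.1 = x.1.1 ∧ (γ : Equiv.Perm V) x.1.2 = x.1.2} := by
  haveI := hstab x.1.1
  exact Finite.of_injective
    (fun g => (⟨g.1, g.2.1⟩ : {γ : Λ // (γ : Equiv.Perm V) x.1.1 = x.1.1}))
    (fun a b h => by simp only [Subtype.mk.injEq] at h; exact Subtype.ext h)

theorem stabE_pos (x : DEdge T) [Finite {γ : Λ // (γ : Equiv.Perm V) x.1.1 = x.1.1 ∧ (γ : Equiv.Perm V) x.1.2 = x.1.2}] :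
    0 < stabE T Λ x := by
  rw [stabE]
  haveI : Nonempty {γ : Λ // (γ : Equiv.Perm V) x.1.1 = x.1.1 ∧ (γ : Equiv.Perm V) x.1.2 = x.1.2} :=
    ⟨⟨1, by simp⟩⟩
  exact Nat.card_pos

include hstab in
theorem one_le_indQ (q : EQ T Λ) : 1 ≤ indQ T Λ q := by
  haveI := hstab (Quot.out q).1.1
  haveI := stabE_finite T Λ hstab (Quot.out q)
  rw [indQ]
  refine (Nat.one_le_div_iff (stabE_pos T Λ (Quot.out q))).2 ?_
  exact Nat.card_le_card_of_injective
    (fun g => (⟨g.1, g.2.1⟩ : {γ : Λ // (γ : Equiv.Perm V) (Quot.out q).1.1 = (Quot.out q).1.1}))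
    (fun a b h => by simp only [Subtype.mk.injEq] at h; exact Subtype.ext h)

end Index

section IndTwo
variable (hstab : ∀ v : V, Finite {γ : Λ // (γ : Equiv.Perm V) v = v})

include hstab in
/-- If two distinct directed edges with the same tail lie in the same `Λ`-class, then
the index of that class is at least 2. -/
theorem two_le_indQ_of_rel {x₁ x₂ : DEdge T} (htail : x₁.1.1 = x₂.1.1)
    (hne : x₁ ≠ x₂) (hcls : πE T Λ x₁ = πE T Λ x₂) : 2 ≤ indQ T Λ (πE T Λ x₁) := by
  set q := πE T Λ x₁ with hq
  obtain ⟨δ, hδ, hδ1, hδ2⟩ := (erel_equiv T Λ).symm (out_rel T Λ (q := q) rfl)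
  obtain ⟨γ, hγ, hγ1, hγ2⟩ := (πE_eq_iff T Λ).1 hcls
  set A := (Quot.out q).1.1 with hA
  set B := (Quot.out q).1.2 with hB
  have hb : x₁.1.2 ≠ x₂.1.2 := by
    intro h; exact hne (Subtype.ext (Prod.ext htail h))
  set dδ : Λ := ⟨δ, hδ⟩ with hdδ
  set dγ : Λ := ⟨γ, hγ⟩ with hdγ
  set σ : Λ := dδ * dγ * dδ⁻¹ with hσ
  have hcoe : (σ : Equiv.Perm V) = δ * γ * δ⁻¹ := by simp [hσ, hdδ, hdγ]
  have hδ1' : (δ⁻¹ : Equiv.Perm V) A = x₁.1.1 := by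
    rw [← hδ1]; exact Equiv.symm_apply_apply δ _
  have hδ2' : (δ⁻¹ : Equiv.Perm V) B = x₁.1.2 := by
    rw [← hδ2]; exact Equiv.symm_apply_apply δ _
  have hσA : (σ : Equiv.Perm V) A = A := by
    rw [hcoe]
    simp only [Equiv.Perm.mul_apply]
    rw [hδ1', hγ1, ← htail, hδ1]
  have hσB : (σ : Equiv.Perm V) B ≠ B := by
    rw [hcoe]
    simp only [Equiv.Perm.mul_apply]
    rw [hδ2', hγ2]
    intro h
    exact hb (δ.injective (h.trans hδ2.symm)).symm
  set S₂ : Set Λ := {g : Λ | (g : Equiv.Perm V) A = A} with hS₂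
  set S₁ : Set Λ := {g : Λ | (g : Equiv.Perm V) A = A ∧ (g : Equiv.Perm V) B = B} with hS₁
  haveI hfin2 : Finite ↥S₂ := hstab A
  haveI hfin1 : Finite ↥S₁ := stabE_finite T Λ hstab (Quot.out q)
  have hssub : S₁ ⊂ S₂ := by
    constructor
    · intro g hg; exact hg.1
    · intro hsub
      exact hσB (hsub hσA).2
  have hlt : Nat.card ↥S₁ < Nat.card ↥S₂ := by
    rw [Nat.card_coe_set_eq, Nat.card_coe_set_eq]
    exact Set.ncard_lt_ncard hssub (S₂.toFinite)
  set KK : Subgroup Λ :=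
    { carrier := S₂
      mul_mem' := by
        rintro a b ha hb
        simp only [hS₂, Set.mem_setOf_eq] at *
        rw [Subgroup.coe_mul, Equiv.Perm.mul_apply, hb, ha]
      one_mem' := by simp [hS₂]
      inv_mem' := by
        rintro a ha
        simp only [hS₂, Set.mem_setOf_eq] at *
        rw [Subgroup.coe_inv, Equiv.Perm.inv_eq_iff_eq]
        exact ha.symm } with hKK
  set HH : Subgroup Λ :=
    { carrier := S₁
      mul_mem' := by
        rintro a b ha hb
        simp only [hS₁, Set.mem_setOf_eq] at *
        constructor
        · rw [Subgroup.coe_mul, Equiv.Perm.mul_apply, hb.1, ha.1]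
        · rw [Subgroup.coe_mul, Equiv.Perm.mul_apply, hb.2, ha.2]
      one_mem' := by simp [hS₁]
      inv_mem' := by
        rintro a ha
        simp only [hS₁, Set.mem_setOf_eq] at *
        constructor
        · rw [Subgroup.coe_inv, Equiv.Perm.inv_eq_iff_eq]
          exact ha.1.symm
        · rw [Subgroup.coe_inv, Equiv.Perm.inv_eq_iff_eq]
          exact ha.2.symm } with hHH
  have hle : HH ≤ KK := fun g hg => hg.1
  have hdvd : Nat.card ↥S₁ ∣ Nat.card ↥S₂ := by
    have h1 := Subgroup.card_subgroup_dvd_card (HH.subgroupOf KK)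
    rw [Nat.card_congr (Subgroup.subgroupOfEquivOfLe hle).toEquiv] at h1
    exact h1
  have hq1 : stabV Λ A = Nat.card ↥S₂ := rfl
  have hq2 : stabE T Λ (Quot.out q) = Nat.card ↥S₁ := rfl
  have h0 : 0 < Nat.card ↥S₁ := by
    rw [← hq2]
    haveI := stabE_finite T Λ hstab (Quot.out q)
    exact stabE_pos T Λ (Quot.out q)
  obtain ⟨m, hm⟩ := hdvd
  have hm2 : 2 ≤ m := by
    have := hlt
    rw [hm] at this
    rcases Nat.lt_or_ge m 2 with h | h
    · interval_cases m <;> omega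
    · exact h
  have hfinal : indQ T Λ q = m := by
    show stabV Λ (Quot.out q).1.1 / stabE T Λ (Quot.out q) = m
    rw [← hA, hq1, hq2, hm, Nat.mul_div_cancel_left _ h0]
  omega

end IndTwo

section Fibers
variable (hΛaut : ∀ γ ∈ Λ, IsTreeAut T γ)
  (hnb : ∀ u : V, Finite (T.neighborSet u))

include hΛaut hnb in
theorem finite_tailfiber (v : VQ Λ) : Finite {q : EQ T Λ // tailQ T Λ q = v} := by
  haveI := hnb (Quot.out v)
  have key : ∀ q : EQ T Λ, tailQ T Λ q = v →
      ∃ w : T.neighborSet (Quot.out v), πE T Λ ⟨((Quot.out v), w.1), w.2⟩ = q := by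
    intro q hq
    have h1 : πV Λ (Quot.out q).1.1 = πV Λ (Quot.out v) := by
      rw [πV_out]; exact hq
    obtain ⟨δ, hδ, hδe⟩ := (πV_eq_iff Λ).1 h1
    have hadj : T.Adj (Quot.out v) (δ (Quot.out q).1.2) := by
      rw [← hδe]
      exact ((hΛaut δ hδ).1 _ _).2 (Quot.out q).2
    refine ⟨⟨δ (Quot.out q).1.2, hadj⟩, ?_⟩
    have : erel T Λ (Quot.out q) ⟨((Quot.out v), δ (Quot.out q).1.2), hadj⟩ :=
      ⟨δ, hδ, hδe, rfl⟩
    rw [← (πE_eq_iff T Λ).2 this, πE_out]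
  refine Finite.of_injective
    (fun s : {q : EQ T Λ // tailQ T Λ q = v} => Classical.choose (key s.1 s.2)) ?_
  intro s t hst
  have hs := Classical.choose_spec (key s.1 s.2)
  have ht := Classical.choose_spec (key t.1 t.2)
  apply Subtype.ext
  rw [← hs, ← ht]
  exact congrArg (fun w : T.neighborSet (Quot.out v) =>
    πE T Λ ⟨((Quot.out v), w.1), w.2⟩) hst

include hΛaut hnb in
theorem finite_headfiber (v : VQ Λ) : Finite {q : EQ T Λ // headQ T Λ q = v} := by
  haveI := finite_tailfiber T Λ hΛaut hnb v
  refine Finite.of_injective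
    (fun s : {q : EQ T Λ // headQ T Λ q = v} =>
      (⟨barQ T Λ s.1, by rw [tailQ_barQ]; exact s.2⟩ : {q : EQ T Λ // tailQ T Λ q = v})) ?_
  intro s t hst
  have := Subtype.ext_iff.1 hst
  simp only at this
  apply Subtype.ext
  rw [← barQ_barQ T Λ s.1, ← barQ_barQ T Λ t.1, this]

variable (hstab : ∀ v : V, Finite {γ : Λ // (γ : Equiv.Perm V) v = v})
  {d₁ d₂ : ℕ} (hT : IsBiregularTree T d₁ d₂) (hd₁ : 3 ≤ d₁) (hd₂ : 3 ≤ d₂)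

include hstab hT hd₁ hd₂ in
theorem exists_nonbar (x : EQ T Λ) (hx : indQ T Λ (barQ T Λ x) = 1) :
    ∃ z : EQ T Λ, tailQ T Λ z = headQ T Λ x ∧ z ≠ barQ T Λ x := by
  by_contra hcon
  push_neg at hcon
  set v0 := Quot.out (headQ T Λ x) with hv0
  haveI := neighbor_finite T hT hd₁ hd₂ v0
  have h3 : 3 ≤ Nat.card (T.neighborSet v0) := three_le_card_neighbor T hT hd₁ hd₂ v0
  haveI : Nontrivial (T.neighborSet v0) := by
    rw [← Finite.one_lt_card_iff_nontrivial]; omega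
  obtain ⟨w₁, w₂, hw⟩ := exists_pair_ne (T.neighborSet v0)
  have htl : ∀ w : T.neighborSet v0, tailQ T Λ (πE T Λ ⟨(v0, w.1), w.2⟩) = headQ T Λ x := by
    intro w
    exact (tailQ_mk T Λ _).trans (πV_out Λ _)
  have h₁ := hcon _ (htl w₁)
  have h₂ := hcon _ (htl w₂)
  have hne : (⟨(v0, w₁.1), w₁.2⟩ : DEdge T) ≠ ⟨(v0, w₂.1), w₂.2⟩ := by
    intro h
    apply hw
    apply Subtype.ext
    exact (Prod.ext_iff.1 (Subtype.ext_iff.1 h)).2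
  have := two_le_indQ_of_rel T Λ hstab (x₁ := ⟨(v0, w₁.1), w₁.2⟩) (x₂ := ⟨(v0, w₂.1), w₂.2⟩)
    rfl hne (h₁.trans h₂.symm)
  rw [h₁, hx] at this
  omega

end Fibers

section Kernel
variable {d₁ d₂ : ℕ} (hT : IsBiregularTree T d₁ d₂) (hd₁ : 3 ≤ d₁) (hd₂ : 3 ≤ d₂)
  (hstab : ∀ v : V, Finite {γ : Λ // (γ : Equiv.Perm V) v = v})
  (hΛaut : ∀ γ ∈ Λ, IsTreeAut T γ)

include hT hd₁ hd₂ in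
theorem denom_pos (v : VQ Λ) : (0:ℝ) < (degQ T Λ v : ℝ) - 1 := by
  have := three_le_degQ T Λ hT hd₁ hd₂ v
  have : (3:ℝ) ≤ (degQ T Λ v : ℝ) := by exact_mod_cast this
  linarith

include hT hd₁ hd₂ hstab in
theorem kerP_nonneg (e f : EQ T Λ) : 0 ≤ kerP T Λ e f := by
  rw [kerP]
  split_ifs with h1 h2
  · apply div_nonneg
    · have := one_le_indQ T Λ hstab f
      have : (1:ℝ) ≤ (indQ T Λ f : ℝ) := by exact_mod_cast this
      linarith
    · have := denom_pos T Λ hT hd₁ hd₂ (headQ T Λ e)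
      linarith
  · apply div_nonneg
    · positivity
    · have := denom_pos T Λ hT hd₁ hd₂ (headQ T Λ e)
      linarith
  · exact le_refl _

include hT hd₁ hd₂ hstab in
theorem kerP_pos_of_ne {e f : EQ T Λ} (h1 : headQ T Λ e = tailQ T Λ f)
    (h2 : f ≠ barQ T Λ e) : 0 < kerP T Λ e f := by
  rw [kerP, if_pos h1, if_neg h2]
  apply div_pos
  · have := one_le_indQ T Λ hstab f
    have : (1:ℝ) ≤ (indQ T Λ f : ℝ) := by exact_mod_cast this
    linarith
  · exact denom_pos T Λ hT hd₁ hd₂ (headQ T Λ e)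

include hT hd₁ hd₂ in
theorem kerP_pos_bar {e : EQ T Λ} (h2 : 2 ≤ indQ T Λ (barQ T Λ e)) :
    0 < kerP T Λ e (barQ T Λ e) := by
  rw [kerP, if_pos (tailQ_barQ T Λ e).symm, if_pos rfl]
  apply div_pos
  · have : (2:ℝ) ≤ (indQ T Λ (barQ T Λ e) : ℝ) := by exact_mod_cast h2
    linarith
  · exact denom_pos T Λ hT hd₁ hd₂ (headQ T Λ e)

theorem kerP_support {e f : EQ T Λ} (h : kerP T Λ e f ≠ 0) : headQ T Λ e = tailQ T Λ f := by
  by_contra hc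
  exact h (by rw [kerP, if_neg hc])

include hT hd₁ hd₂ hstab in
theorem kerPn_nonneg (n : ℕ) (e f : EQ T Λ) : 0 ≤ kerPn T Λ n e f := by
  induction n generalizing f with
  | zero =>
    rw [kerPn]; split_ifs <;> norm_num
  | succ n ih =>
    rw [kerPn]
    apply tsum_nonneg
    intro g
    exact mul_nonneg (ih g) (kerP_nonneg T Λ hT hd₁ hd₂ hstab g f)

theorem kerPn_one (e f : EQ T Λ) : kerPn T Λ 1 e f = kerP T Λ e f := by
  rw [kerPn]
  rw [tsum_eq_single e]
  · rw [kerPn, if_pos rfl, one_mul]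
  · intro g hg
    rw [kerPn, if_neg (fun h => hg h.symm), zero_mul]

include hT hd₁ hd₂ hstab hΛaut in
theorem kerPn_step_pos (hnb : ∀ u : V, Finite (T.neighborSet u))
    {n : ℕ} {x g y : EQ T Λ} (h1 : 0 < kerPn T Λ n x g) (h2 : 0 < kerP T Λ g y) :
    0 < kerPn T Λ (n+1) x y := by
  rw [kerPn]
  haveI := finite_headfiber T Λ hΛaut hnb (tailQ T Λ y)
  have hSfin : {gg : EQ T Λ | headQ T Λ gg = tailQ T Λ y}.Finite := by
    have : Finite ↥{gg : EQ T Λ | headQ T Λ gg = tailQ T Λ y} :=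
      finite_headfiber T Λ hΛaut hnb (tailQ T Λ y)
    exact Set.toFinite _
  have hsum : Summable (fun gg : EQ T Λ => kerPn T Λ n x gg * kerP T Λ gg y) := by
    apply summable_of_ne_finset_zero (s := hSfin.toFinset)
    intro b hb
    rw [Set.Finite.mem_toFinset] at hb
    have : kerP T Λ b y = 0 := by
      by_contra hc
      exact hb (kerP_support T Λ hc)
    rw [this, mul_zero]
  calc (0:ℝ) < kerPn T Λ n x g * kerP T Λ g y := mul_pos h1 h2
    _ ≤ ∑' gg, kerPn T Λ n x gg * kerP T Λ gg y := by
        apply Summable.le_tsum hsum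
        intro b _
        exact mul_nonneg (kerPn_nonneg T Λ hT hd₁ hd₂ hstab n x b)
          (kerP_nonneg T Λ hT hd₁ hd₂ hstab b y)

include hT hd₁ hd₂ hstab in
theorem kerPn_extract {n : ℕ} {x y : EQ T Λ} (h : 0 < kerPn T Λ (n+1) x y) :
    ∃ g, 0 < kerPn T Λ n x g ∧ 0 < kerP T Λ g y := by
  by_contra hc
  push_neg at hc
  have hz : (fun g => kerPn T Λ n x g * kerP T Λ g y) = fun _ => (0:ℝ) := by
    funext g
    rcases lt_or_eq_of_le (kerPn_nonneg T Λ hT hd₁ hd₂ hstab n x g) with h1 | h1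
    · have h2 := hc g h1
      have h3 := kerP_nonneg T Λ hT hd₁ hd₂ hstab g y
      have : kerP T Λ g y = 0 := le_antisymm h2 h3
      rw [this, mul_zero]
    · rw [← h1, zero_mul]
  rw [kerPn, hz, tsum_zero] at h
  exact lt_irrefl _ h

include hT hd₁ hd₂ hstab hΛaut in
theorem kerPn_comp (hnb : ∀ u : V, Finite (T.neighborSet u))
    {m n : ℕ} {x y z : EQ T Λ} (h1 : 0 < kerPn T Λ m x y) (h2 : 0 < kerPn T Λ n y z) :
    0 < kerPn T Λ (m+n) x z := by
  induction n generalizing z with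
  | zero =>
    rw [kerPn] at h2
    split_ifs at h2 with h
    · rw [← h]; exact h1
    · exact absurd h2 (lt_irrefl 0)
  | succ n ih =>
    obtain ⟨g, hg1, hg2⟩ := kerPn_extract T Λ hT hd₁ hd₂ hstab h2
    have := kerPn_step_pos T Λ hT hd₁ hd₂ hstab hΛaut hnb (ih hg1) hg2
    rwa [Nat.add_assoc] at this

end Kernel

section Parity
variable {c : V → Bool} (hprop : ∀ u v, T.Adj u v → c u ≠ c v)
  (hΛaut : ∀ γ ∈ Λ, IsTreeAut T γ) (hconn : T.Connected)

include hprop hΛaut hconn in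
theorem kerPn_parity (n : ℕ) (x : EQ T Λ) :
    ∀ y : EQ T Λ, kerPn T Λ n x y ≠ 0 →
    ((cbar T Λ hprop hΛaut hconn (tailQ T Λ y) = cbar T Λ hprop hΛaut hconn (tailQ T Λ x))
      ↔ Even n) := by
  induction n with
  | zero =>
    intro y h
    rw [kerPn] at h
    split_ifs at h with he
    · subst he; simp
    · exact absurd rfl h
  | succ n ih =>
    intro y h
    have hex : ∃ g, kerPn T Λ n x g ≠ 0 ∧ kerP T Λ g y ≠ 0 := by
      by_contra hc
      push_neg at hc
      apply h
      rw [kerPn]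
      have hz : (fun g => kerPn T Λ n x g * kerP T Λ g y) = fun _ => (0:ℝ) := by
        funext g
        rcases Classical.em (kerPn T Λ n x g = 0) with h1 | h1
        · rw [h1, zero_mul]
        · rw [hc g h1, mul_zero]
      rw [hz, tsum_zero]
    obtain ⟨g, hg1, hg2⟩ := hex
    have h3 : headQ T Λ g = tailQ T Λ y := kerP_support T Λ hg2
    have hflip : cbar T Λ hprop hΛaut hconn (tailQ T Λ g) ≠
        cbar T Λ hprop hΛaut hconn (tailQ T Λ y) := by
      rw [← h3]
      exact cbar_flip T Λ hprop hΛaut hconn g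
    have ihg := ih g hg1
    rw [Nat.even_add_one, ← ihg]
    cases ha : cbar T Λ hprop hΛaut hconn (tailQ T Λ y) <;>
      cases hb : cbar T Λ hprop hΛaut hconn (tailQ T Λ g) <;>
      cases hcc : cbar T Λ hprop hΛaut hconn (tailQ T Λ x) <;>
      simp_all

end Parity

section TimeRev
variable {d₁ d₂ : ℕ} (hT : IsBiregularTree T d₁ d₂) (hd₁ : 3 ≤ d₁) (hd₂ : 3 ≤ d₂)
  (hstab : ∀ v : V, Finite {γ : Λ // (γ : Equiv.Perm V) v = v})
  (hΛaut : ∀ γ ∈ Λ, IsTreeAut T γ)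
  (hnb : ∀ u : V, Finite (T.neighborSet u))

include hT hd₁ hd₂ hstab in
theorem kerP_rev {x y : EQ T Λ} (h : 0 < kerP T Λ x y) :
    0 < kerP T Λ (barQ T Λ y) (barQ T Λ x) := by
  have hsupp : headQ T Λ x = tailQ T Λ y := kerP_support T Λ (ne_of_gt h)
  rcases Classical.em (y = barQ T Λ x) with hb | hb
  · -- bar step: kerP x (bar x) > 0 means ind (bar x) ≥ 2, and the reversed step is the same
    subst hb
    rw [barQ_barQ]
    exact h
  · apply kerP_pos_of_ne T Λ hT hd₁ hd₂ hstab
    · rw [headQ_barQ, tailQ_barQ, ← hsupp]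
    · intro hc
      rw [barQ_barQ] at hc
      exact hb hc.symm

include hT hd₁ hd₂ hstab hΛaut hnb in
theorem kerPn_rev {n : ℕ} {x y : EQ T Λ} (h : 0 < kerPn T Λ n x y) :
    0 < kerPn T Λ n (barQ T Λ y) (barQ T Λ x) := by
  induction n generalizing y with
  | zero =>
    rw [kerPn] at h ⊢
    split_ifs at h with he
    · rw [if_pos (by rw [he]), ← he] at *
      norm_num
    · exact absurd h (lt_irrefl 0)
  | succ n ih =>
    obtain ⟨g, hg1, hg2⟩ := kerPn_extract T Λ hT hd₁ hd₂ hstab h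
    have h1 : 0 < kerPn T Λ 1 (barQ T Λ y) (barQ T Λ g) := by
      rw [kerPn_one]
      exact kerP_rev T Λ hT hd₁ hd₂ hstab hg2
    have h2 := ih hg1
    have := kerPn_comp T Λ hT hd₁ hd₂ hstab hΛaut hnb h1 h2
    rwa [Nat.add_comm] at this

end TimeRev

section Rev
variable {d₁ d₂ : ℕ} (hT : IsBiregularTree T d₁ d₂) (hd₁ : 3 ≤ d₁) (hd₂ : 3 ≤ d₂)
  (hstab : ∀ v : V, Finite {γ : Λ // (γ : Equiv.Perm V) v = v})
  (hΛaut : ∀ γ ∈ Λ, IsTreeAut T γ)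
  (hnb : ∀ u : V, Finite (T.neighborSet u))
  (N : VQ Λ → ℝ) (hNpos : ∀ v, 0 < N v)
  (hNe : ∀ e : EQ T Λ, N (headQ T Λ e) = deltaQ T Λ e * N (tailQ T Λ e))
  (hNsum : Summable (fun v : VQ Λ => (N v)⁻¹))

include hT hd₁ hd₂ hstab hΛaut hnb hNpos hNe hNsum in
/-- Any state can reach its reversal: the key consequence of the lattice property. -/
theorem rev_lemma (z : EQ T Λ) : ∃ m, 0 < m ∧ 0 < kerPn T Λ m z (barQ T Λ z) := by
  by_contra hcon
  push_neg at hcon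
  set RS : Set (EQ T Λ) := {w | ∃ n, 0 < kerPn T Λ n z w} with hRS
  have hzRS : z ∈ RS := ⟨0, by rw [kerPn, if_pos rfl]; norm_num⟩
  -- no element of RS can reach its own reversal
  have hreach_bar : ∀ w ∈ RS, ∀ n, 0 < n → 0 < kerPn T Λ n w (barQ T Λ w) → False := by
    rintro w ⟨n₁, hn₁⟩ n hn hpos
    have h2 : 0 < kerPn T Λ n₁ (barQ T Λ w) (barQ T Λ z) :=
      kerPn_rev T Λ hT hd₁ hd₂ hstab hΛaut hnb hn₁
    have h3 := kerPn_comp T Λ hT hd₁ hd₂ hstab hΛaut hnb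
      (kerPn_comp T Λ hT hd₁ hd₂ hstab hΛaut hnb hn₁ hpos) h2
    exact absurd h3 (not_lt.2 (hcon _ (by omega)))
  -- every element of RS is blocked
  have hblock : ∀ w ∈ RS, indQ T Λ (barQ T Λ w) = 1 := by
    intro w hw
    by_contra hne
    have h1 := one_le_indQ T Λ hstab (barQ T Λ w)
    have h2 : 2 ≤ indQ T Λ (barQ T Λ w) := by omega
    exact hreach_bar w hw 1 one_pos
      (by rw [kerPn_one]; exact kerP_pos_bar T Λ hT hd₁ hd₂ h2)
  -- RS is closed under non-backtracking continuation
  have hF3 : ∀ w ∈ RS, ∀ y : EQ T Λ, tailQ T Λ y = headQ T Λ w → y ≠ barQ T Λ w → y ∈ RS := by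
    rintro w ⟨n₁, hn₁⟩ y h1 h2
    refine ⟨n₁ + 1, kerPn_step_pos T Λ hT hd₁ hd₂ hstab hΛaut hnb hn₁ ?_⟩
    exact kerP_pos_of_ne T Λ hT hd₁ hd₂ hstab h1.symm h2
  -- the head map is injective on RS
  have hF4 : ∀ w₁ ∈ RS, ∀ w₂ ∈ RS, headQ T Λ w₁ = headQ T Λ w₂ → w₁ = w₂ := by
    rintro w₁ ⟨n₁, h₁⟩ w₂ ⟨n₂, h₂⟩ hh
    by_contra hne
    have hstep : 0 < kerP T Λ w₁ (barQ T Λ w₂) := by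
      apply kerP_pos_of_ne T Λ hT hd₁ hd₂ hstab
      · rw [tailQ_barQ, hh]
      · intro hc
        apply hne
        rw [← barQ_barQ T Λ w₁, ← hc, barQ_barQ]
    have hrev : 0 < kerPn T Λ n₂ (barQ T Λ w₂) (barQ T Λ z) :=
      kerPn_rev T Λ hT hd₁ hd₂ hstab hΛaut hnb h₂
    have hmid : 0 < kerPn T Λ (n₁ + 1) z (barQ T Λ w₂) :=
      kerPn_step_pos T Λ hT hd₁ hd₂ hstab hΛaut hnb h₁ hstep
    have h3 := kerPn_comp T Λ hT hd₁ hd₂ hstab hΛaut hnb hmid hrev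
    exact absurd h3 (not_lt.2 (hcon _ (by omega)))
  -- N decreases along chains
  have hNle : ∀ n, ∀ w, 0 < kerPn T Λ n z w → N (headQ T Λ w) ≤ N (headQ T Λ z) := by
    intro n
    induction n with
    | zero =>
      intro w h
      rw [kerPn] at h
      split_ifs at h with he
      · rw [← he]
      · exact absurd h (lt_irrefl 0)
    | succ n ih =>
      intro w h
      obtain ⟨g, hg1, hg2⟩ := kerPn_extract T Λ hT hd₁ hd₂ hstab h
      have hwRS : w ∈ RS := ⟨n + 1, h⟩
      have h3 : tailQ T Λ w = headQ T Λ g := (kerP_support T Λ (ne_of_gt hg2)).symm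
      have h1 : (1:ℝ) ≤ (indQ T Λ w : ℝ) := by
        exact_mod_cast one_le_indQ T Λ hstab w
      have hdel : deltaQ T Λ w = 1 / (indQ T Λ w : ℝ) := by
        rw [deltaQ, hblock w hwRS]; norm_num
      have hcalc : N (headQ T Λ w) = N (headQ T Λ g) / (indQ T Λ w : ℝ) := by
        rw [hNe w, hdel, h3]; ring
      calc N (headQ T Λ w) = N (headQ T Λ g) / (indQ T Λ w : ℝ) := hcalc
        _ ≤ N (headQ T Λ g) / 1 := by
            apply div_le_div_of_nonneg_left (le_of_lt (hNpos _)) one_pos h1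
        _ = N (headQ T Λ g) := by ring
        _ ≤ N (headQ T Λ z) := ih g hg1
  rcases Set.finite_or_infinite RS with hfin | hinf
  · -- finite case
    haveI hRSfin : Finite ↥RS := hfin
    have hcontex : ∀ w : RS, ∃ y : RS, tailQ T Λ (y : EQ T Λ) = headQ T Λ (w : EQ T Λ) ∧
        (y : EQ T Λ) ≠ barQ T Λ (w : EQ T Λ) := by
      rintro ⟨w, hw⟩
      obtain ⟨y, hy1, hy2⟩ := exists_nonbar T Λ hstab hT hd₁ hd₂ w (hblock w hw)
      exact ⟨⟨y, hF3 w hw y hy1 hy2⟩, hy1, hy2⟩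
    choose cont hcont1 hcont2 using hcontex
    have hinj : Function.Injective cont := by
      intro a b hab
      apply Subtype.ext
      apply hF4 _ a.2 _ b.2
      have h1 := hcont1 a
      have h2 := hcont1 b
      rw [hab] at h1
      rw [← h1, h2]
    have hsurj : Function.Surjective cont := Finite.injective_iff_surjective.1 hinj
    set z' : RS := ⟨z, hzRS⟩ with hz'
    set G : ℕ → RS := fun k => cont^[k] z' with hG
    obtain ⟨i, j, hij, hGij⟩ : ∃ i j, i < j ∧ G i = G j := by
      obtain ⟨i, j, hne, heq⟩ := Finite.exists_ne_map_eq_of_infinite G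
      rcases Nat.lt_or_ge i j with h | h
      · exact ⟨i, j, h, heq⟩
      · exact ⟨j, i, by omega, heq.symm⟩
    have hm : cont^[j - i] z' = z' := by
      have h1 : cont^[i] (cont^[j - i] z') = cont^[i] z' := by
        rw [← Function.iterate_add_apply]
        have : i + (j - i) = j := by omega
        rw [this]
        exact hGij.symm
      exact (hinj.iterate i) h1
    set m := j - i with hmm
    have hm1 : 1 ≤ m := by omega
    -- all classes at head z are cont z' or bar z
    have hclasses : ∀ y : EQ T Λ, tailQ T Λ y = headQ T Λ z →
        y = (cont z' : EQ T Λ) ∨ y = barQ T Λ z := by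
      intro y hy
      rcases Classical.em (y = barQ T Λ z) with hb | hb
      · exact Or.inr hb
      · left
        have hyRS : y ∈ RS := hF3 z hzRS y hy hb
        obtain ⟨w, hw⟩ := hsurj ⟨y, hyRS⟩
        have h1 : tailQ T Λ y = headQ T Λ (w : EQ T Λ) := by
          rw [← hcont1 w, hw]
        have h2 : (w : EQ T Λ) = z := hF4 _ w.2 _ hzRS (by rw [← h1, hy])
        have h3 : w = z' := Subtype.ext h2
        rw [← h3]
        exact (congrArg Subtype.val hw).symm
    -- pigeonhole: the class cont z' has index ≥ 2
    have hind2 : 2 ≤ indQ T Λ (cont z' : EQ T Λ) := by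
      set v0 := Quot.out (headQ T Λ z) with hv0
      haveI := neighbor_finite T hT hd₁ hd₂ v0
      haveI := Fintype.ofFinite (T.neighborSet v0)
      have hcard : 2 < Fintype.card (T.neighborSet v0) := by
        have h3 := three_le_card_neighbor T hT hd₁ hd₂ v0
        rw [Nat.card_eq_fintype_card] at h3
        omega
      have hcardb : Fintype.card Bool < Fintype.card (T.neighborSet v0) := by
        simpa using hcard
      obtain ⟨w₁, w₂, hw12, heq⟩ := Fintype.exists_ne_map_eq_of_card_lt
        (fun w : T.neighborSet v0 =>
          decide (πE T Λ ⟨(v0, w.1), w.2⟩ = (cont z' : EQ T Λ))) hcardb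
      have htail : ∀ w : T.neighborSet v0, tailQ T Λ (πE T Λ ⟨(v0, w.1), w.2⟩) = headQ T Λ z := by
        intro w
        exact (tailQ_mk T Λ _).trans (πV_out Λ _)
      have hclass1 := hclasses _ (htail w₁)
      have hclass2 := hclasses _ (htail w₂)
      have hsame : πE T Λ ⟨(v0, w₁.1), w₁.2⟩ = πE T Λ ⟨(v0, w₂.1), w₂.2⟩ := by
        rcases hclass1 with h1 | h1 <;> rcases hclass2 with h2 | h2
        · rw [h1, h2]
        · exfalso
          rw [h1] at heq
          simp only [decide_eq_decide] at heq
          have hc : πE T Λ ⟨(v0, w₂.1), w₂.2⟩ = (cont z' : EQ T Λ) := heq.1 trivial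
          rw [h2] at hc
          exact hcont2 z' hc.symm
        · exfalso
          rw [h2] at heq
          simp only [decide_eq_decide] at heq
          have hc : πE T Λ ⟨(v0, w₁.1), w₁.2⟩ = (cont z' : EQ T Λ) := heq.2 trivial
          rw [h1] at hc
          exact hcont2 z' hc.symm
        · rw [h1, h2]
      have hne12 : (⟨(v0, w₁.1), w₁.2⟩ : DEdge T) ≠ ⟨(v0, w₂.1), w₂.2⟩ := by
        intro h
        apply hw12
        apply Subtype.ext
        exact (Prod.ext_iff.1 (Subtype.ext_iff.1 h)).2
      have h2le := two_le_indQ_of_rel T Λ hstab (x₁ := ⟨(v0, w₁.1), w₁.2⟩)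
        (x₂ := ⟨(v0, w₂.1), w₂.2⟩) rfl hne12 hsame
      rcases hclass1 with h1 | h1
      · rwa [h1] at h2le
      · rw [h1] at h2le
        have := hblock z hzRS
        omega
    -- N strictly decreases around the cycle: contradiction
    have hstepN : ∀ w : RS, N (headQ T Λ (cont w : EQ T Λ)) ≤ N (headQ T Λ (w : EQ T Λ)) := by
      intro w
      have h1 : (1:ℝ) ≤ (indQ T Λ (cont w : EQ T Λ) : ℝ) := by
        exact_mod_cast one_le_indQ T Λ hstab _
      have hdel : deltaQ T Λ (cont w : EQ T Λ) = 1 / (indQ T Λ (cont w : EQ T Λ) : ℝ) := by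
        rw [deltaQ, hblock _ (cont w).2]; norm_num
      have hcalc : N (headQ T Λ (cont w : EQ T Λ)) =
          N (headQ T Λ (w : EQ T Λ)) / (indQ T Λ (cont w : EQ T Λ) : ℝ) := by
        rw [hNe, hdel, hcont1]; ring
      rw [hcalc]
      calc N (headQ T Λ (w : EQ T Λ)) / (indQ T Λ (cont w : EQ T Λ) : ℝ)
          ≤ N (headQ T Λ (w : EQ T Λ)) / 1 :=
            div_le_div_of_nonneg_left (le_of_lt (hNpos _)) one_pos h1
        _ = N (headQ T Λ (w : EQ T Λ)) := by ring
    have hstep0 : N (headQ T Λ (cont z' : EQ T Λ)) ≤ N (headQ T Λ z) / 2 := by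
      have h1 : (2:ℝ) ≤ (indQ T Λ (cont z' : EQ T Λ) : ℝ) := by exact_mod_cast hind2
      have hdel : deltaQ T Λ (cont z' : EQ T Λ) = 1 / (indQ T Λ (cont z' : EQ T Λ) : ℝ) := by
        rw [deltaQ, hblock _ (cont z').2]; norm_num
      have hcalc : N (headQ T Λ (cont z' : EQ T Λ)) =
          N (headQ T Λ z) / (indQ T Λ (cont z' : EQ T Λ) : ℝ) := by
        rw [hNe, hdel, hcont1]; ring
      rw [hcalc]
      exact div_le_div_of_nonneg_left (le_of_lt (hNpos _)) two_pos h1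
    have hmono : ∀ k, 1 ≤ k → N (headQ T Λ (G k : EQ T Λ)) ≤ N (headQ T Λ z) / 2 := by
      intro k
      induction k with
      | zero => omega
      | succ k ih =>
        intro _
        rcases Nat.lt_or_ge k 1 with hk | hk
        · have hk0 : k = 0 := by omega
          subst hk0
          have : G 1 = cont z' := by rw [hG]; rfl
          rw [this]
          exact hstep0
        · have hGs : G (k+1) = cont (G k) := by
            rw [hG]
            exact Function.iterate_succ_apply' cont k z'
          rw [hGs]
          calc N (headQ T Λ (cont (G k) : EQ T Λ)) ≤ N (headQ T Λ (G k : EQ T Λ)) := hstepN _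
            _ ≤ N (headQ T Λ z) / 2 := ih hk
    have hfinal := hmono m hm1
    have hGm : G m = z' := hm
    rw [hGm] at hfinal
    have := hNpos (headQ T Λ z)
    simp only [hz'] at hfinal
    linarith
  · -- infinite case
    have hinjOn : Set.InjOn (headQ T Λ) RS := fun a ha b hb hab => hF4 a ha b hb hab
    have himg : (headQ T Λ '' RS).Infinite := hinf.image hinjOn
    have hev : ∀ᶠ v in Filter.cofinite, (N v)⁻¹ < (N (headQ T Λ z))⁻¹ := by
      apply hNsum.tendsto_cofinite_zero.eventually_lt_const
      exact inv_pos.2 (hNpos _)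
    have hfinset : {v : VQ Λ | ¬ (N v)⁻¹ < (N (headQ T Λ z))⁻¹}.Finite :=
      Filter.eventually_cofinite.mp hev
    apply himg
    apply hfinset.subset
    rintro v ⟨w, hw, rfl⟩
    simp only [Set.mem_setOf_eq, not_lt]
    obtain ⟨n, hn⟩ := hw
    exact inv_anti₀ (hNpos _) (hNle n w hn)

end Rev

section Irr
variable {d₁ d₂ : ℕ} (hT : IsBiregularTree T d₁ d₂) (hd₁ : 3 ≤ d₁) (hd₂ : 3 ≤ d₂)
  (hstab : ∀ v : V, Finite {γ : Λ // (γ : Equiv.Perm V) v = v})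
  (hΛaut : ∀ γ ∈ Λ, IsTreeAut T γ)
  (hnb : ∀ u : V, Finite (T.neighborSet u))
  (N : VQ Λ → ℝ) (hNpos : ∀ v, 0 < N v)
  (hNe : ∀ e : EQ T Λ, N (headQ T Λ e) = deltaQ T Λ e * N (tailQ T Λ e))
  (hNsum : Summable (fun v : VQ Λ => (N v)⁻¹))

include hT hd₁ hd₂ hstab hΛaut hnb hNpos hNe hNsum in
theorem step_reach {g y : EQ T Λ} (h : headQ T Λ g = tailQ T Λ y) :
    ∃ p, 0 < p ∧ 0 < kerPn T Λ p g y := by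
  rcases Classical.em (y = barQ T Λ g) with hb | hb
  · subst hb
    exact rev_lemma T Λ hT hd₁ hd₂ hstab hΛaut hnb N hNpos hNe hNsum g
  · exact ⟨1, one_pos, by
      rw [kerPn_one]
      exact kerP_pos_of_ne T Λ hT hd₁ hd₂ hstab h hb⟩

include hT hd₁ hd₂ hstab hΛaut hnb hNpos hNe hNsum in
theorem reach (x y : EQ T Λ) : ∃ p, 0 < p ∧ 0 < kerPn T Λ p x y := by
  have main : ∀ (u cc : V) (w : T.Walk u cc) (x : EQ T Λ), headQ T Λ x = πV Λ u →
      ∀ y : EQ T Λ, tailQ T Λ y = πV Λ cc → ∃ p, 0 < p ∧ 0 < kerPn T Λ p x y := by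
    intro u cc w
    induction w with
    | nil =>
      intro x hx y hy
      exact step_reach T Λ hT hd₁ hd₂ hstab hΛaut hnb N hNpos hNe hNsum
        (by rw [hx, hy])
    | @cons u v' cc hadj w ih =>
      intro x hx y hy
      set zq := πE T Λ ⟨(u, v'), hadj⟩ with hzq
      have htl : tailQ T Λ zq = πV Λ u := tailQ_mk T Λ _
      have hhd : headQ T Λ zq = πV Λ v' := headQ_mk T Λ _
      obtain ⟨p₁, hp₁0, hp₁⟩ := step_reach T Λ hT hd₁ hd₂ hstab hΛaut hnb N hNpos hNe hNsum
        (g := x) (y := zq) (by rw [hx, htl])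
      obtain ⟨p₂, hp₂0, hp₂⟩ := ih zq hhd y hy
      exact ⟨p₁ + p₂, by omega, kerPn_comp T Λ hT hd₁ hd₂ hstab hΛaut hnb hp₁ hp₂⟩
  obtain ⟨w⟩ := hT.1 (Quot.out x).1.2 (Quot.out y).1.1
  exact main _ _ w x rfl y rfl

end Irr



/-- Lemma 3.3. If the edge-indexed quotient graph contains two
consecutive edges `f, e` with `e ≠ f̄` and both indices `> 1`, then the period of the
associated (irreducible) Markov chain is exactly `2`; i.e. for every state `s`, the gcd
of `{n ≥ 1 | Pⁿ(s,s) > 0}` equals `2`. -/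
theorem markov_chain_period_two {V : Type*} (T : SimpleGraph V)
    (d₁ d₂ : ℕ) (hd₁ : 3 ≤ d₁) (hd₂ : 3 ≤ d₂) (hT : IsBiregularTree T d₁ d₂)
    (Λ : Subgroup (Equiv.Perm V)) (hΛ : IsTreeLattice T Λ)
    (e f : EQ T Λ) (hef : e ≠ barQ T Λ f) (hcons : headQ T Λ f = tailQ T Λ e)
    (hinde : 1 < indQ T Λ e) (hindf : 1 < indQ T Λ f) :
    ∀ s : EQ T Λ,
      (∀ n : ℕ, 0 < n → 0 < kerPn T Λ n s s → 2 ∣ n) ∧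
      (∀ d : ℕ, (∀ n : ℕ, 0 < n → 0 < kerPn T Λ n s s → d ∣ n) → d ∣ 2) := by
  classical
  have hΛaut := hΛ.1
  have hstab := hΛ.2.1
  obtain ⟨o, N, hNo, hNpos, hNe, hNsum⟩ := hΛ.2.2
  have hconn := hT.1
  obtain ⟨c, hprop, hc1, hc2⟩ := hT.2.2
  have hnb : ∀ u : V, Finite (T.neighborSet u) := fun u => neighbor_finite T hT hd₁ hd₂ u
  intro s
  constructor
  · intro n hn hpos
    have hpar := kerPn_parity T Λ hprop hΛaut hconn n s s (ne_of_gt hpos)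
    exact (hpar.1 rfl).two_dvd
  · intro d hd
    obtain ⟨p, hp0, hp⟩ := reach T Λ hT hd₁ hd₂ hstab hΛaut hnb N hNpos hNe hNsum
      s (barQ T Λ e)
    obtain ⟨q, hq0, hq⟩ := reach T Λ hT hd₁ hd₂ hstab hΛaut hnb N hNpos hNe hNsum
      e s
    have mid1 : 0 < kerPn T Λ 1 (barQ T Λ e) e := by
      rw [kerPn_one]
      have h2 : 2 ≤ indQ T Λ (barQ T Λ (barQ T Λ e)) := by
        rw [barQ_barQ]; exact hinde
      have := kerP_pos_bar T Λ hT hd₁ hd₂ h2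
      rwa [barQ_barQ] at this
    have s1 : 0 < kerP T Λ (barQ T Λ e) (barQ T Λ f) := by
      apply kerP_pos_of_ne T Λ hT hd₁ hd₂ hstab
      · rw [headQ_barQ, tailQ_barQ, hcons]
      · intro hc
        rw [barQ_barQ] at hc
        exact hef hc.symm
    have s2 : 0 < kerP T Λ (barQ T Λ f) f := by
      have h2 : 2 ≤ indQ T Λ (barQ T Λ (barQ T Λ f)) := by
        rw [barQ_barQ]; exact hindf
      have := kerP_pos_bar T Λ hT hd₁ hd₂ h2
      rwa [barQ_barQ] at this
    have s3 : 0 < kerP T Λ f e := kerP_pos_of_ne T Λ hT hd₁ hd₂ hstab hcons hef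
    have mid3 : 0 < kerPn T Λ 3 (barQ T Λ e) e := by
      have c1 : 0 < kerPn T Λ 1 (barQ T Λ e) (barQ T Λ f) := by rw [kerPn_one]; exact s1
      have c2 : 0 < kerPn T Λ 1 (barQ T Λ f) f := by rw [kerPn_one]; exact s2
      have c3 : 0 < kerPn T Λ 1 f e := by rw [kerPn_one]; exact s3
      have := kerPn_comp T Λ hT hd₁ hd₂ hstab hΛaut hnb
        (kerPn_comp T Λ hT hd₁ hd₂ hstab hΛaut hnb c1 c2) c3
      exact this
    have loop1 : 0 < kerPn T Λ (p + 1 + q) s s :=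
      kerPn_comp T Λ hT hd₁ hd₂ hstab hΛaut hnb
        (kerPn_comp T Λ hT hd₁ hd₂ hstab hΛaut hnb hp mid1) hq
    have loop2 : 0 < kerPn T Λ (p + 3 + q) s s :=
      kerPn_comp T Λ hT hd₁ hd₂ hstab hΛaut hnb
        (kerPn_comp T Λ hT hd₁ hd₂ hstab hΛaut hnb hp mid3) hq
    have hdvd1 := hd _ (by omega) loop1
    have hdvd2 := hd _ (by omega) loop2
    have hsub := Nat.dvd_sub hdvd2 hdvd1
    have heq : (p + 3 + q) - (p + 1 + q) = 2 := by omega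
    rwa [heq] at hsub


end TreeDyn
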